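/- Let U' = {(z₁, z₂) ∈ ℂ² : v − 2z₂z̄₂ > 0, v = z₁ + z̄₁}, let g = (v − 2z₂z̄₂)^{−1/2}(dz₁ − 2z̄₂dz₂)(dz̄₁ − 2z₂dz̄₂) + 4(v − 2z₂z̄₂)^{1/2} dz₂ dz̄₂, and define J = i[(dz₁ − 2z̄₂dz₂)⊗∂_{z₁} − (dz̄₁ − 2z₂dz̄₂)⊗∂_{z̄₁} + dz̄₂⊗(∂_{z̄₂} + 2z₂∂_{z̄₁}) − dz₂⊗(∂_{z₂} + 2z̄₂∂_{z₁})]. Then at every point of U', J is a real endomorphism of the tangent space satisfying J² = −id and g(JX, JY) = g(X,Y), and J is integrable: its Nijenhuis tensor N_J(X,Y) = [JX, JY] − [X,Y] − J[JX, Y] − J[X, JY] vanishes identically on U'. -/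

import Mathlib

noncomputable section

/-- `w(z₁,z₂) = v − 2z₂z̄₂` where `v = z₁ + z̄₁ = 2 Re z₁`. -/
def wDef (p : ℂ × ℂ) : ℝ := 2 * p.1.re - 2 * Complex.normSq p.2

/-- The region `U' = {(z₁,z₂) ∈ ℂ² : v − 2z₂z̄₂ > 0}`. -/
def Uprime : Set (ℂ × ℂ) := {p | 0 < wDef p}

/-- `K = log(v − 2z₂z̄₂)`. -/
def KDef (p : ℂ × ℂ) : ℝ := Real.log (wDef p)

/-- `K` as a function of `v` at fixed `z₂`. -/
def KofV (z₂ : ℂ) (v : ℝ) : ℝ := Real.log (v - 2 * Complex.normSq z₂)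

/-- `K_v = ∂K/∂v`. -/
def Kv (p : ℂ × ℂ) : ℝ := deriv (KofV p.2) (2 * p.1.re)

/-- `K_vv = ∂²K/∂v²`. -/
def Kvv (p : ℂ × ℂ) : ℝ := deriv (deriv (KofV p.2)) (2 * p.1.re)

/-- The Wirtinger derivative `∂G/∂z = ½(∂_x G − i ∂_y G)` of `G : ℂ → ℂ` at `c`. -/
def wirtD (G : ℂ → ℂ) (c : ℂ) : ℂ :=
  (deriv (fun x : ℝ => G ((x : ℂ) + (c.im : ℂ) * Complex.I)) c.re -
    Complex.I * deriv (fun y : ℝ => G ((c.re : ℂ) + (y : ℂ) * Complex.I)) c.im) / 2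

/-- The Wirtinger derivative `∂G/∂z̄ = ½(∂_x G + i ∂_y G)` of `G : ℂ → ℂ` at `c`. -/
def wirtDbar (G : ℂ → ℂ) (c : ℂ) : ℂ :=
  (deriv (fun x : ℝ => G ((x : ℂ) + (c.im : ℂ) * Complex.I)) c.re +
    Complex.I * deriv (fun y : ℝ => G ((c.re : ℂ) + (y : ℂ) * Complex.I)) c.im) / 2

/-- `K_{v2} = ∂²K/∂v∂z₂` (Wirtinger derivative in `z₂` of `K_v`). -/
def Kv2 (p : ℂ × ℂ) : ℂ :=
  wirtD (fun z₂ => ((deriv (KofV z₂) (2 * p.1.re) : ℝ) : ℂ)) p.2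

/-- `K_{v2̄} = ∂²K/∂v∂z̄₂`. -/
def Kv2bar (p : ℂ × ℂ) : ℂ :=
  wirtDbar (fun z₂ => ((deriv (KofV z₂) (2 * p.1.re) : ℝ) : ℂ)) p.2

/-- `K_{22̄} = ∂²K/∂z₂∂z̄₂` (at fixed `v`). -/
def K22bar (p : ℂ × ℂ) : ℂ :=
  wirtDbar (fun z₂ =>
    wirtD (fun u => ((Real.log (2 * p.1.re - 2 * Complex.normSq u) : ℝ) : ℂ)) z₂) p.2

/-- The 1-form `dz₁ − 2z̄₂dz₂` evaluated on a real tangent vector `X ∈ ℂ² ≅ ℝ⁴`. -/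
def AForm (p : ℂ × ℂ) (X : ℂ × ℂ) : ℂ := X.1 - 2 * starRingEnd ℂ p.2 * X.2

/-- The explicit Ricci-flat metric
`g = (v − 2z₂z̄₂)^{−1/2}(dz₁ − 2z̄₂dz₂)(dz̄₁ − 2z₂dz̄₂) + 4(v − 2z₂z̄₂)^{1/2} dz₂ dz̄₂`
(with `2αβ = α⊗β + β⊗α`) on real tangent vectors. -/
def gExpl (p : ℂ × ℂ) (X Y : ℂ × ℂ) : ℝ :=
  1 / Real.sqrt (wDef p) * (AForm p X * starRingEnd ℂ (AForm p Y)).re +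
    4 * Real.sqrt (wDef p) * (X.2 * starRingEnd ℂ Y.2).re

/-- The almost complex structure
`J⁺_{e^{iφ}} = 2Re{ i e^{iφ} [ (2(v − 2z₂z̄₂)^{1/2})^{−1}(dz₁ − 2z̄₂dz₂) ⊗ (∂_{z̄₂} + 2z₂∂_{z̄₁}) − 2(v − 2z₂z̄₂)^{1/2} dz₂ ⊗ ∂_{z̄₁} ] }`
as a real endomorphism of the tangent space `ℂ² ≅ ℝ⁴`: a real tangent vector `X`
corresponds to `X.1 ∂_{z₁} + conj X.1 ∂_{z̄₁} + X.2 ∂_{z₂} + conj X.2 ∂_{z̄₂}` in the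
complexified tangent space; the components below are the `∂_{z₁}`- and
`∂_{z₂}`-coefficients of `(T + T̄)(X)`. -/
def JExpl (φ : ℝ) (p : ℂ × ℂ) (X : ℂ × ℂ) : ℂ × ℂ :=
  (starRingEnd ℂ (Complex.I * Complex.exp ((φ : ℂ) * Complex.I) *
      (AForm p X / (2 * (Real.sqrt (wDef p) : ℂ)) * (2 * p.2) -
        2 * (Real.sqrt (wDef p) : ℂ) * X.2)),
   starRingEnd ℂ (Complex.I * Complex.exp ((φ : ℂ) * Complex.I) *
      (AForm p X / (2 * (Real.sqrt (wDef p) : ℂ)))))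

/-- The hermitian structure (of the opposite orientation)
`J = i[(dz₁ − 2z̄₂dz₂)⊗∂_{z₁} − (dz̄₁ − 2z₂dz̄₂)⊗∂_{z̄₁} + dz̄₂⊗(∂_{z̄₂} + 2z₂∂_{z̄₁}) − dz₂⊗(∂_{z₂} + 2z̄₂∂_{z₁})]`
as a real endomorphism of the tangent space `ℂ² ≅ ℝ⁴`: a real tangent vector `X`
corresponds to `X.1 ∂_{z₁} + conj X.1 ∂_{z̄₁} + X.2 ∂_{z₂} + conj X.2 ∂_{z̄₂}`; the
components below are the `∂_{z₁}`- and `∂_{z₂}`-coefficients of `J X` (the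
`∂_{z̄}`-coefficients are their conjugates). -/
def JKah (p : ℂ × ℂ) (X : ℂ × ℂ) : ℂ × ℂ :=
  (Complex.I * AForm p X + (-Complex.I * X.2) * (2 * starRingEnd ℂ p.2),
   -Complex.I * X.2)

/-- The Lie bracket `[X,Y]` of two vector fields on (an open subset of) `ℂ² ≅ ℝ⁴`. -/
def lieBr (X Y : ℂ × ℂ → ℂ × ℂ) (p : ℂ × ℂ) : ℂ × ℂ :=
  fderiv ℝ Y p (X p) - fderiv ℝ X p (Y p)

/-- The vector field `J X`. -/
def JKahField (X : ℂ × ℂ → ℂ × ℂ) : ℂ × ℂ → ℂ × ℂ := fun p => JKah p (X p)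

/-- The Nijenhuis tensor `N_J(X,Y) = [JX, JY] − [X,Y] − J[JX, Y] − J[X, JY]` of `J`. -/
def nijKah (X Y : ℂ × ℂ → ℂ × ℂ) (p : ℂ × ℂ) : ℂ × ℂ :=
  lieBr (JKahField X) (JKahField Y) p - lieBr X Y p -
    JKah p (lieBr (JKahField X) Y p) - JKah p (lieBr X (JKahField Y) p)

open Complex

lemma JKah_eq' (p X : ℂ × ℂ) :
    JKah p X = (I * X.1 - 4 * I * (starRingEnd ℂ p.2 * X.2), -I * X.2) := by
  simp only [JKah, AForm, Prod.mk.injEq]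
  exact ⟨by ring, trivial⟩

lemma fderiv_JKahField_apply' (X : ℂ × ℂ → ℂ × ℂ) (hX : Differentiable ℝ X)
    (p v : ℂ × ℂ) :
    fderiv ℝ (JKahField X) p v =
      (I * (fderiv ℝ X p v).1 - 4 * I * ((starRingEnd ℂ v.2) * (X p).2)
        - 4 * I * (starRingEnd ℂ p.2 * (fderiv ℝ X p v).2),
       -I * (fderiv ℝ X p v).2) := by
  have hX' : HasFDerivAt X (fderiv ℝ X p) p := (hX p).hasFDerivAt
  have h1 := hX'.fst
  have h2 := hX'.snd
  have hc : HasFDerivAt (fun q : ℂ × ℂ => starRingEnd ℂ q.2)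
      ((Complex.conjCLE.toContinuousLinearMap).comp (ContinuousLinearMap.snd ℝ ℂ ℂ)) p :=
    (Complex.conjCLE.hasFDerivAt).comp p (hasFDerivAt_snd)
  have hmul := (hc.mul h2).const_mul (4 * I)
  have hf1 := (h1.const_mul I).sub hmul
  have hfull := HasFDerivAt.prodMk hf1 (h2.const_mul (-I))
  have heq : (fun q : ℂ × ℂ => (I * (X q).1 - 4 * I * (starRingEnd ℂ q.2 * (X q).2),
      -I * (X q).2)) = JKahField X := by
    funext q
    rw [JKahField, JKah_eq']
  replace hfull := hfull.congr_of_eventuallyEq (Filter.EventuallyEq.of_eq heq.symm)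
  rw [hfull.fderiv]
  simp [smul_eq_mul]
  ring_nf

lemma AForm_JKah (p X : ℂ × ℂ) : AForm p (JKah p X) = I * AForm p X := by
  simp only [JKah, AForm]
  ring


/-- At every point of `U'`, `J` is a real endomorphism of the tangent
space with `J² = −id`, compatible with the explicit metric `g`, and `J` is integrable:
its Nijenhuis tensor vanishes identically on `U'`. -/
theorem JKah_hermitian_integrable :
    (∀ p ∈ Uprime,
      (∀ X Y : ℂ × ℂ, JKah p (X + Y) = JKah p X + JKah p Y) ∧
      (∀ (c : ℝ) (X : ℂ × ℂ), JKah p (c • X) = c • JKah p X) ∧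
      (∀ X : ℂ × ℂ, JKah p (JKah p X) = -X) ∧
      (∀ X Y : ℂ × ℂ, gExpl p (JKah p X) (JKah p Y) = gExpl p X Y)) ∧
    (∀ X Y : ℂ × ℂ → ℂ × ℂ, ContDiff ℝ (⊤ : ℕ∞) X → ContDiff ℝ (⊤ : ℕ∞) Y →
      ∀ p ∈ Uprime, nijKah X Y p = 0) := by
  constructor
  · intro p _
    refine ⟨?_, ?_, ?_, ?_⟩
    · intro X Y
      refine Prod.ext ?_ ?_ <;> simp [JKah, AForm] <;> ring
    · intro c X
      refine Prod.ext ?_ ?_ <;>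
        simp [JKah, AForm, Prod.smul_fst, Prod.smul_snd, Complex.real_smul] <;> ring
    · intro X
      rw [JKah_eq', JKah_eq']
      refine Prod.ext ?_ ?_
      · show I * (I * X.1 - 4 * I * (starRingEnd ℂ p.2 * X.2)) -
          4 * I * (starRingEnd ℂ p.2 * (-I * X.2)) = (-X).1
        simp only [Prod.fst_neg]
        linear_combination (X.1 - 4 * (starRingEnd ℂ p.2 * X.2) +
          4 * (starRingEnd ℂ p.2 * X.2)) * Complex.I_sq
      · show -I * (-I * X.2) = (-X).2
        simp only [Prod.snd_neg]
        linear_combination X.2 * Complex.I_sq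
    · intro X Y
      have h1 : AForm p (JKah p X) * starRingEnd ℂ (AForm p (JKah p Y)) =
          AForm p X * starRingEnd ℂ (AForm p Y) := by
        rw [AForm_JKah, AForm_JKah, map_mul, Complex.conj_I]
        linear_combination (-(AForm p X * starRingEnd ℂ (AForm p Y))) * Complex.I_sq
      have h2 : (JKah p X).2 * starRingEnd ℂ ((JKah p Y).2) =
          X.2 * starRingEnd ℂ Y.2 := by
        simp only [JKah, map_mul, map_neg, Complex.conj_I]
        linear_combination (-(X.2 * starRingEnd ℂ Y.2)) * Complex.I_sq
      simp only [gExpl, h1, h2]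
  · intro X Y hX hY p _
    have hXd : Differentiable ℝ X := hX.differentiable (by simp)
    have hYd : Differentiable ℝ Y := hY.differentiable (by simp)
    simp only [nijKah, lieBr, fderiv_JKahField_apply' X hXd,
      fderiv_JKahField_apply' Y hYd, JKahField, JKah_eq']
    refine Prod.ext ?_ ?_ <;>
      simp only [Prod.fst_sub, Prod.snd_sub, Prod.fst_zero, Prod.snd_zero,
        map_sub, map_mul, map_neg, Complex.conj_I, map_ofNat] <;>
      ring_nf <;>
      simp [Complex.I_sq]
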